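/- Let κ > 1, L > 0, m = L/κ, ρ = 1 − 1/√κ, and let (α, β, γ) = ((1+ρ)/L, ρ²/(2−ρ), ρ²/((1+ρ)(2−ρ))) be the triple momentum parameters. Then, as rational functions of z, [z² − (1+β)z + β + Lα((1+γ)z − γ)] / [z² − (1+β)z + β + mα((1+γ)z − γ)] = z(ρ + z)/((z − ρ)(z − ρ²)); equivalently, the circle-criterion transfer function H(z) = [1 + L Q₀(z)][1 + m Q₀(z)]^{−1}, with Q₀(z) = α((1+γ)z − γ)/(z² − (1+β)z + β) the transfer function of the linear part of the triple momentum method, equals z(ρ + z)/((z − ρ)(z − ρ²)). -/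

import Mathlib

open Complex

/-- For the triple momentum parameters
`(α, β, γ) = ((1+ρ)/L, ρ²/(2−ρ), ρ²/((1+ρ)(2−ρ)))` with `ρ = 1 − 1/√κ` and
`m = L/κ`, the circle-criterion transfer function
`H(z) = [z² − (1+β)z + β + Lα((1+γ)z − γ)] / [z² − (1+β)z + β + mα((1+γ)z − γ)]`
equals `z(ρ + z)/((z − ρ)(z − ρ²))` as a rational function of `z`. -/
theorem triple_momentum_transfer_function (κ L : ℝ) (hκ : 1 < κ) (hL : 0 < L)
    (m ρ α β γ : ℝ) (hm : m = L / κ) (hρ : ρ = 1 - 1 / Real.sqrt κ)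
    (hα : α = (1 + ρ) / L) (hβ : β = ρ ^ 2 / (2 - ρ))
    (hγ : γ = ρ ^ 2 / ((1 + ρ) * (2 - ρ))) :
    -- equality as rational functions: cross-multiplied polynomial identity
    (∀ z : ℂ,
      (z ^ 2 - (1 + (β : ℂ)) * z + (β : ℂ) +
          (L : ℂ) * (α : ℂ) * ((1 + (γ : ℂ)) * z - (γ : ℂ))) *
        ((z - (ρ : ℂ)) * (z - (ρ : ℂ) ^ 2)) =
      z * ((ρ : ℂ) + z) *
        (z ^ 2 - (1 + (β : ℂ)) * z + (β : ℂ) +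
          (m : ℂ) * (α : ℂ) * ((1 + (γ : ℂ)) * z - (γ : ℂ)))) ∧
    -- pointwise equality of the quotients away from the poles
    (∀ z : ℂ, (z - (ρ : ℂ)) * (z - (ρ : ℂ) ^ 2) ≠ 0 →
      z ^ 2 - (1 + (β : ℂ)) * z + (β : ℂ) +
        (m : ℂ) * (α : ℂ) * ((1 + (γ : ℂ)) * z - (γ : ℂ)) ≠ 0 →
      (z ^ 2 - (1 + (β : ℂ)) * z + (β : ℂ) +
          (L : ℂ) * (α : ℂ) * ((1 + (γ : ℂ)) * z - (γ : ℂ))) /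
        (z ^ 2 - (1 + (β : ℂ)) * z + (β : ℂ) +
          (m : ℂ) * (α : ℂ) * ((1 + (γ : ℂ)) * z - (γ : ℂ))) =
      z * ((ρ : ℂ) + z) / ((z - (ρ : ℂ)) * (z - (ρ : ℂ) ^ 2))) := by

  have hs : (0:ℝ) < Real.sqrt κ := Real.sqrt_pos.mpr (by linarith)
  have hs1 : 1 < Real.sqrt κ := by
    have := Real.sqrt_lt_sqrt (by norm_num) hκ
    simpa using this
  have hρ1 : 1 - ρ = 1 / Real.sqrt κ := by rw [hρ]; ring
  have hρpos : 0 < ρ := by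
    rw [hρ]
    have : 1 / Real.sqrt κ < 1 := by
      rw [div_lt_one hs]; exact hs1
    linarith
  have hρlt : ρ < 1 := by
    rw [hρ]
    have : 0 < 1 / Real.sqrt κ := by positivity
    linarith
  have hκ0 : κ ≠ 0 := by linarith
  have hinv : (1 - ρ) ^ 2 = 1 / κ := by
    rw [hρ1, div_pow, one_pow, Real.sq_sqrt (by linarith : (0:ℝ) ≤ κ)]
  have h1ρ : (1 + ρ) ≠ 0 := by linarith
  have h2ρ : (2 - ρ) ≠ 0 := by linarith
  have hLα : L * α = 1 + ρ := by rw [hα]; field_simp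
  have hmα : m * α = (1 + ρ) * (1 - ρ) ^ 2 := by
    rw [hm, hα, hinv]; field_simp
  have eA1 : L * α * γ = β := by
    rw [hLα, hγ, hβ]; field_simp
  have eA2 : L * α * (1 + γ) = 1 + β + ρ := by
    rw [hLα, hγ, hβ]; field_simp; ring
  have eB1 : m * α * γ = β - ρ ^ 3 := by
    rw [hmα, hγ, hβ]; field_simp; ring
  have eB2 : m * α * (1 + γ) = 1 + β - ρ - ρ ^ 2 := by
    rw [hmα, hγ, hβ]; field_simp; ring
  have ceA1 : (L : ℂ) * α * γ = β := by exact_mod_cast congrArg Complex.ofReal eA1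
  have ceA2 : (L : ℂ) * α * (1 + γ) = 1 + β + ρ := by exact_mod_cast congrArg Complex.ofReal eA2
  have ceB1 : (m : ℂ) * α * γ = β - ρ ^ 3 := by exact_mod_cast congrArg Complex.ofReal eB1
  have ceB2 : (m : ℂ) * α * (1 + γ) = 1 + β - ρ - ρ ^ 2 := by exact_mod_cast congrArg Complex.ofReal eB2
  have key : ∀ z : ℂ,
      (z ^ 2 - (1 + (β : ℂ)) * z + (β : ℂ) +
          (L : ℂ) * (α : ℂ) * ((1 + (γ : ℂ)) * z - (γ : ℂ))) *
        ((z - (ρ : ℂ)) * (z - (ρ : ℂ) ^ 2)) =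
      z * ((ρ : ℂ) + z) *
        (z ^ 2 - (1 + (β : ℂ)) * z + (β : ℂ) +
          (m : ℂ) * (α : ℂ) * ((1 + (γ : ℂ)) * z - (γ : ℂ))) := by
    intro z
    linear_combination (z * (z - (ρ:ℂ)) * (z - (ρ:ℂ) ^ 2)) * ceA2
      - ((z - (ρ:ℂ)) * (z - (ρ:ℂ) ^ 2)) * ceA1
      - (z * ((ρ:ℂ) + z) * z) * ceB2 + (z * ((ρ:ℂ) + z)) * ceB1
  refine ⟨key, fun z hd hn => ?_⟩
  rw [div_eq_div_iff hn hd]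
  linear_combination key z
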